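/- Let A(t) and B(t) be polynomials in ℚ[t] that are nonnegative, unimodal, and palindromic with centers of symmetry c_A and c_B respectively. Then A(t)·B(t) is nonnegative, unimodal, and palindromic with center of symmetry c_A + c_B. Moreover, if c_A = c_B then A(t)+B(t) is nonnegative, unimodal, and palindromic with center c_A. -/

import Mathlib

/-- `f` is nonnegative, unimodal and palindromic with center of symmetry `c`: all
coefficients are `≥ 0`, they weakly increase up to the center, coefficients in positions
summing to `2c` agree, and coefficients vanish beyond `2c`. -/
def PUP (f : Polynomial ℚ) (c : ℚ) : Prop :=
  (∀ i : ℕ, 0 ≤ f.coeff i) ∧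
  (∀ i j : ℕ, i ≤ j → (j : ℚ) ≤ c → f.coeff i ≤ f.coeff j) ∧
  (∀ i j : ℕ, (i : ℚ) + (j : ℚ) = 2 * c → f.coeff i = f.coeff j) ∧
  (∀ i : ℕ, 2 * c < (i : ℚ) → f.coeff i = 0)

open Polynomial Finset

/-- coefficient function extended to `ℤ` -/
noncomputable def fc (f : Polynomial ℚ) (z : ℤ) : ℚ :=
  if 0 ≤ z then f.coeff z.toNat else 0

lemma fc_nonneg (f : Polynomial ℚ) (n : ℕ) (hf : PUP f ((n:ℚ)/2)) (z : ℤ) : 0 ≤ fc f z := by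
  unfold fc; split_ifs
  · exact hf.1 _
  · exact le_refl 0

lemma fc_vanish (f : Polynomial ℚ) (n : ℕ) (hf : PUP f ((n:ℚ)/2)) (z : ℤ) (hz : (n:ℤ) < z) :
    fc f z = 0 := by
  unfold fc; split_ifs with h
  · apply hf.2.2.2
    have h2 : (n : ℤ) < (z.toNat : ℤ) := by omega
    have h3 : ((n:ℤ) : ℚ) < ((z.toNat : ℤ) : ℚ) := by exact_mod_cast h2
    push_cast at h3 ⊢
    linarith
  · rfl

lemma fc_palin (f : Polynomial ℚ) (n : ℕ) (hf : PUP f ((n:ℚ)/2)) (z : ℤ) :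
    fc f ((n:ℤ) - z) = fc f z := by
  rcases lt_trichotomy z 0 with h | h
  · rw [fc_vanish f n hf _ (by omega)]
    rw [fc, if_neg (by omega)]
  · rcases le_or_gt z (n:ℤ) with h2 | h2
    · rw [fc, fc, if_pos (by omega), if_pos (by omega)]
      apply hf.2.2.1
      have : (((n:ℤ) - z).toNat : ℤ) + (z.toNat : ℤ) = (n:ℤ) := by omega
      have h3 : ((((n:ℤ) - z).toNat : ℤ) : ℚ) + ((z.toNat : ℤ) : ℚ) = ((n:ℤ) : ℚ) := by
        exact_mod_cast congrArg (fun t : ℤ => (t : ℚ)) this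
      push_cast at h3 ⊢
      linarith
    · rw [fc_vanish f n hf _ h2, fc, if_neg (by omega)]

lemma fc_mono (f : Polynomial ℚ) (n : ℕ) (hf : PUP f ((n:ℚ)/2)) (z w : ℤ)
    (hzw : z ≤ w) (hsum : z + w ≤ (n:ℤ)) : fc f z ≤ fc f w := by
  rcases lt_or_ge z 0 with h | h
  · rw [fc, if_neg (by omega)]
    exact fc_nonneg f n hf w
  · have hw : 0 ≤ w := le_trans h hzw
    rw [fc, fc, if_pos h, if_pos hw]
    set a := z.toNat with ha
    set b := w.toNat with hb
    have hab : a ≤ b := by omega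
    have habn : a + b ≤ n := by omega
    rcases le_or_gt (2 * b) n with h2 | h2
    · apply hf.2.1 a b hab
      have : ((2 * b : ℕ) : ℚ) ≤ ((n:ℕ) : ℚ) := by exact_mod_cast h2
      push_cast at this
      linarith
    · have hbn : b ≤ n := by omega
      have hpal : f.coeff b = f.coeff (n - b) := by
        apply hf.2.2.1
        have : ((b + (n - b) : ℕ) : ℚ) = (n : ℚ) := by exact_mod_cast congrArg (fun t : ℕ => (t:ℚ)) (by omega : b + (n - b) = n)
        push_cast [Nat.cast_sub hbn] at this ⊢
        linarith
      rw [hpal]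
      apply hf.2.1 a (n - b) (by omega)
      have : (2 * (n - b) : ℕ) ≤ n := by omega
      have h3 : ((2 * (n - b) : ℕ) : ℚ) ≤ (n : ℚ) := by exact_mod_cast this
      push_cast at h3
      linarith

/-- the "interval" polynomial `X^i + X^(i+1) + ... + X^(m-i)` -/
noncomputable def Sp (i m : ℕ) : Polynomial ℚ :=
  ∑ p ∈ Finset.Ico i (m - i + 1), Polynomial.X ^ p

lemma coeff_Sp (i m k : ℕ) :
    (Sp i m).coeff k = if k ∈ Finset.Ico i (m - i + 1) then 1 else 0 := by
  rw [Sp, finset_sum_coeff]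
  simp only [coeff_X_pow]
  exact Finset.sum_ite_eq (Finset.Ico i (m - i + 1)) k (fun _ => 1)

lemma coeff_Sp_mul (i m : ℕ) (f : Polynomial ℚ) (k : ℕ) :
    (Sp i m * f).coeff k = ∑ p ∈ Finset.Ico i (m - i + 1), fc f ((k:ℤ) - (p:ℤ)) := by
  rw [Sp, Finset.sum_mul, finset_sum_coeff]
  apply Finset.sum_congr rfl
  intro p _
  rw [X_pow_mul, coeff_mul_X_pow']
  unfold fc
  split_ifs with h1 h2 h2
  · congr 1; omega
  · omega
  · omega
  · rfl

lemma mono_of_step (g : ℕ → ℚ) (c : ℚ)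
    (H : ∀ k : ℕ, ((k:ℚ) + 1 ≤ c) → g k ≤ g (k+1)) :
    ∀ i j : ℕ, i ≤ j → (j : ℚ) ≤ c → g i ≤ g j := by
  intro i j
  induction j with
  | zero => intro hij _; interval_cases i; exact le_refl _
  | succ j ih =>
    intro hij hj
    rcases Nat.eq_or_lt_of_le hij with h | h
    · rw [h]
    · have h1 : (j : ℚ) ≤ c := by push_cast at hj ⊢; linarith
      have h2 : g j ≤ g (j+1) := H j (by push_cast at hj ⊢; linarith)
      exact le_trans (ih (by omega) h1) h2

lemma pup_Sp_mul (f : Polynomial ℚ) (n : ℕ) (hf : PUP f ((n:ℚ)/2)) (i m : ℕ)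
    (him : 2 * i ≤ m) : PUP (Sp i m * f) ((n:ℚ)/2 + (m:ℚ)/2) := by
  set N := m - 2 * i + 1 with hN
  have hNr : m - i + 1 - i = N := by omega
  refine ⟨?_, ?_, ?_, ?_⟩
  · intro k
    rw [coeff_Sp_mul]
    exact Finset.sum_nonneg fun p _ => fc_nonneg f n hf _
  · -- unimodality
    apply mono_of_step
    intro k hk
    have hk' : 2 * k + 2 ≤ n + m := by
      have : ((2 * k + 2 : ℕ) : ℚ) ≤ ((n + m : ℕ) : ℚ) := by push_cast; linarith
      exact_mod_cast this
    rw [coeff_Sp_mul, coeff_Sp_mul, Finset.sum_Ico_eq_sum_range,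
      Finset.sum_Ico_eq_sum_range, hNr]
    have key : fc f ((k:ℤ) + 1 - i - N) ≤ fc f ((k:ℤ) + 1 - i - 0) :=
      fc_mono f n hf _ _ (by omega) (by omega)
    have tele := Finset.sum_range_sub' (fun j => fc f ((k:ℤ) + 1 - i - j)) N
    rw [Finset.sum_sub_distrib] at tele
    have e1 : ∀ j ∈ Finset.range N,
        fc f (((k+1:ℕ):ℤ) - ((i + j : ℕ):ℤ)) = fc f ((k:ℤ) + 1 - i - j) := by
      intro j _; congr 1; push_cast; ring
    have e2 : ∀ j ∈ Finset.range N,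
        fc f ((k:ℤ) - ((i + j : ℕ):ℤ)) = fc f ((k:ℤ) + 1 - i - ((j:ℤ) + 1)) := by
      intro j _; congr 1; push_cast; ring
    rw [Finset.sum_congr rfl e1, Finset.sum_congr rfl e2]
    push_cast at tele
    have hNe : ((N:ℕ):ℤ) = ((m - 2*i : ℕ):ℤ) + 1 := by omega
    rw [hNe] at key tele
    linarith [tele, key]
  · -- palindromic
    intro k j hsum
    have hkj : k + j = n + m := by
      have : ((k + j : ℕ) : ℚ) = ((n + m : ℕ) : ℚ) := by push_cast; push_cast at hsum; linarith
      exact_mod_cast this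
    rw [coeff_Sp_mul, coeff_Sp_mul, Finset.sum_Ico_eq_sum_range,
      Finset.sum_Ico_eq_sum_range, hNr]
    conv_rhs => rw [← Finset.sum_range_reflect]
    apply Finset.sum_congr rfl
    intro jj hjj
    simp only [Finset.mem_range] at hjj
    have harg : (j:ℤ) - ((i + (N - 1 - jj) : ℕ):ℤ) = (n:ℤ) - ((k:ℤ) - ((i + jj : ℕ):ℤ)) := by
      omega
    rw [harg, fc_palin f n hf]
  · -- vanishing
    intro k hk
    have hk' : n + m < k := by
      have : ((n + m : ℕ) : ℚ) < (k : ℚ) := by push_cast; push_cast at hk; linarith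
      exact_mod_cast this
    rw [coeff_Sp_mul]
    apply Finset.sum_eq_zero
    intro p hp
    simp only [Finset.mem_Ico] at hp
    exact fc_vanish f n hf _ (by omega)

lemma pup_zero (c : ℚ) : PUP 0 c :=
  ⟨fun _ => by simp, fun _ _ _ _ => by simp, fun _ _ _ => by simp, fun _ _ => by simp⟩

lemma pup_add' (f g : Polynomial ℚ) (c : ℚ) (hf : PUP f c) (hg : PUP g c) :
    PUP (f + g) c := by
  refine ⟨?_, ?_, ?_, ?_⟩ <;> intros <;> simp only [Polynomial.coeff_add]
  · exact add_nonneg (hf.1 _) (hg.1 _)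
  · exact add_le_add (hf.2.1 _ _ ‹_› ‹_›) (hg.2.1 _ _ ‹_› ‹_›)
  · rw [hf.2.2.1 _ _ ‹_›, hg.2.2.1 _ _ ‹_›]
  · rw [hf.2.2.2 _ ‹_›, hg.2.2.2 _ ‹_›, add_zero]

lemma pup_C_mul (a : ℚ) (ha : 0 ≤ a) (f : Polynomial ℚ) (c : ℚ) (hf : PUP f c) :
    PUP (Polynomial.C a * f) c := by
  refine ⟨?_, ?_, ?_, ?_⟩ <;> intros <;> simp only [Polynomial.coeff_C_mul]
  · exact mul_nonneg ha (hf.1 _)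
  · exact mul_le_mul_of_nonneg_left (hf.2.1 _ _ ‹_› ‹_›) ha
  · rw [hf.2.2.1 _ _ ‹_›]
  · rw [hf.2.2.2 _ ‹_›, mul_zero]

lemma pup_sum {ι : Type*} (s : Finset ι) (F : ι → Polynomial ℚ) (c : ℚ)
    (h : ∀ i ∈ s, PUP (F i) c) : PUP (∑ i ∈ s, F i) c := by
  classical
  induction s using Finset.induction_on with
  | empty => simpa using pup_zero c
  | insert _ _ hx ih =>
    rw [Finset.sum_insert hx]
    exact pup_add' _ _ _ (h _ (Finset.mem_insert_self _ _))
      (ih fun i hi => h i (Finset.mem_insert_of_mem hi))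

/-- the increment sequence of a polynomial -/
noncomputable def dd (A : Polynomial ℚ) (i : ℕ) : ℚ :=
  A.coeff i - (if i = 0 then 0 else A.coeff (i - 1))

lemma dd_nonneg (A : Polynomial ℚ) (n : ℕ) (hA : PUP A ((n:ℚ)/2)) (i : ℕ) (hi : 2 * i ≤ n) :
    0 ≤ dd A i := by
  unfold dd
  split_ifs with h
  · simpa using hA.1 i
  · have : A.coeff (i - 1) ≤ A.coeff i := by
      apply hA.2.1 _ _ (by omega)
      have : ((2 * i : ℕ) : ℚ) ≤ (n : ℚ) := by exact_mod_cast hi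
      push_cast at this; linarith
    linarith

lemma decomp (A : Polynomial ℚ) (n : ℕ) (hA : PUP A ((n:ℚ)/2)) :
    A = ∑ i ∈ Finset.range (n / 2 + 1), Polynomial.C (dd A i) * Sp i n := by
  ext k
  rw [finset_sum_coeff]
  simp only [Polynomial.coeff_C_mul, coeff_Sp, Finset.mem_Ico, mul_ite, mul_one, mul_zero]
  rcases le_or_gt k n with hk | hk
  · -- k ≤ n
    set K := min k (n - k) with hK
    have hcond : ∀ i ∈ Finset.range (n / 2 + 1),
        (if i ≤ k ∧ k < n - i + 1 then dd A i else 0) = (if i ≤ K then dd A i else 0) := by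
      intro i _
      congr 1
      simp only [eq_iff_iff]
      omega
    rw [Finset.sum_congr rfl hcond]
    rw [← Finset.sum_subset (Finset.range_subset_range.2 (by omega : K + 1 ≤ n / 2 + 1))
      (fun x _ hx => by rw [if_neg (by simp only [Finset.mem_range] at hx; omega)])]
    have : ∑ i ∈ Finset.range (K + 1), (if i ≤ K then dd A i else 0)
        = ∑ i ∈ Finset.range (K + 1), dd A i := by
      apply Finset.sum_congr rfl
      intro i hi
      rw [if_pos (by simp only [Finset.mem_range] at hi; omega)]
    rw [this]
    have tele := Finset.sum_range_sub
      (fun i => if i = 0 then (0:ℚ) else A.coeff (i - 1)) (K + 1)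
    simp only at tele
    have : ∑ i ∈ Finset.range (K + 1), dd A i = A.coeff K := by
      unfold dd
      rw [show (∑ i ∈ Finset.range (K + 1),
        (A.coeff i - if i = 0 then (0:ℚ) else A.coeff (i-1))) =
        ∑ i ∈ Finset.range (K + 1),
        ((if i + 1 = 0 then (0:ℚ) else A.coeff (i + 1 - 1)) -
          (if i = 0 then (0:ℚ) else A.coeff (i-1))) from
        Finset.sum_congr rfl (fun i _ => by simp)]
      rw [tele]
      simp
    rw [this]
    rcases le_or_gt k (n - k) with h | h
    · rw [show K = k by omega]
    · rw [show K = n - k by omega]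
      apply hA.2.2.1
      have h2 : (((n - k : ℕ) + k : ℕ) : ℚ) = ((n:ℕ) : ℚ) := by
        norm_cast
        omega
      push_cast at h2 ⊢
      linarith
  · -- k > n : all zero
    rw [Finset.sum_eq_zero (fun i _ => by rw [if_neg (by omega)])]
    apply hA.2.2.2
    have : (n : ℚ) < (k : ℚ) := by exact_mod_cast hk
    linarith

/-- If `A` and `B` are nonnegative, unimodal, palindromic with centers `c_A = n_A/2` and
`c_B = n_B/2`, then `A·B` is nonnegative, unimodal, palindromic with center `c_A + c_B`;
and if moreover `c_A = c_B` then so is `A + B` with center `c_A`. -/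
theorem unimodal_palindromic_tool (A B : Polynomial ℚ) (nA nB : ℕ) (cA cB : ℚ)
    (hcA : cA = (nA : ℚ) / 2) (hcB : cB = (nB : ℚ) / 2)
    (hA : PUP A cA) (hB : PUP B cB) :
    PUP (A * B) (cA + cB) ∧ (cA = cB → PUP (A + B) cA) := by
  have hA' : PUP A ((nA:ℚ)/2) := hcA ▸ hA
  have hB' : PUP B ((nB:ℚ)/2) := hcB ▸ hB
  constructor
  · have hmul : A * B = ∑ i ∈ Finset.range (nA / 2 + 1),
        Polynomial.C (dd A i) * (Sp i nA * B) := by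
      conv_lhs => rw [decomp A nA hA']
      rw [Finset.sum_mul]
      exact Finset.sum_congr rfl fun i _ => mul_assoc _ _ _
    rw [hmul, show cA + cB = (nB:ℚ)/2 + (nA:ℚ)/2 by rw [hcA, hcB]; ring]
    apply pup_sum
    intro i hi
    simp only [Finset.mem_range] at hi
    exact pup_C_mul _ (dd_nonneg A nA hA' i (by omega)) _ _
      (pup_Sp_mul B nB hB' i nA (by omega))
  · intro hcc
    exact pup_add' _ _ _ hA (hcc ▸ hB)
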